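/- If G and H are connected graphs, each on n vertices, with δ = min{δ(G), δ(H)} satisfying δ ≥ 2^{12n/δ + 15}, and if every graph of diameter at most d and connectivity at least 2^{2d+3} has pebbling number equal to its number of vertices (the Czygrinow–Hurlbert–Kierstead–Trotter theorem), then π(G □ H) = n², i.e., G □ H is Class 0, and hence π(G □ H) ≤ π(G)·π(H). -/

import Mathlib

open Finset

/-- A single pebbling move: remove two pebbles from `u` and add one pebble to an
adjacent vertex `v`. -/
def PebblingStep {V : Type*} [DecidableEq V] (G : SimpleGraph V)
    (C C' : V → ℕ) : Prop :=
  ∃ u v : V, G.Adj u v ∧ 2 ≤ C u ∧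
    C' = fun x => if x = u then C u - 2 else if x = v then C x + 1 else C x

/-- A configuration `C` is `r`-solvable if some sequence of pebbling moves
places a pebble on `r`. -/
def Solvable {V : Type*} [DecidableEq V] (G : SimpleGraph V)
    (C : V → ℕ) (r : V) : Prop :=
  ∃ C' : V → ℕ, Relation.ReflTransGen (PebblingStep G) C C' ∧ 1 ≤ C' r

/-- `p` is the pebbling number of `G`: the least `t` such that every
configuration of `t` pebbles is solvable to every root. -/
def IsPebblingNumber {V : Type*} [Fintype V] [DecidableEq V]
    (G : SimpleGraph V) (p : ℕ) : Prop :=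
  IsLeast {t : ℕ | ∀ C : V → ℕ, ∑ v, C v = t → ∀ r : V, Solvable G C r} p

/-- `G` has vertex connectivity at least `k`: every set of vertices whose removal
leaves a graph that is not connected has at least `k` elements. -/
def HasConnectivityAtLeast {V : Type*} (G : SimpleGraph V) (k : ℕ) : Prop :=
  ∀ S : Set V, ¬ (G.induce Sᶜ).Connected → k ≤ S.ncard


lemma walk_split {V : Type*} {G : SimpleGraph V} {u v : V} (p : G.Walk u v) :
    ∀ j ≤ p.length, ∃ (w : V) (p1 : G.Walk u w) (p2 : G.Walk w v),
      p1.length = j ∧ p2.length = p.length - j := by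
  induction p with
  | nil =>
    intro j hj
    simp only [SimpleGraph.Walk.length_nil, Nat.le_zero] at hj
    subst hj
    exact ⟨_, SimpleGraph.Walk.nil, SimpleGraph.Walk.nil, rfl, rfl⟩
  | cons h q ih =>
    intro j hj
    cases j with
    | zero => exact ⟨_, SimpleGraph.Walk.nil, SimpleGraph.Walk.cons h q, rfl, rfl⟩
    | succ k =>
      obtain ⟨w, p1, p2, h1, h2⟩ := ih k (by simpa using Nat.succ_le_succ_iff.mp hj)
      exact ⟨w, SimpleGraph.Walk.cons h p1, p2, by simp [h1], by simp [h2]⟩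

lemma exists_dist_eq_of_le {V : Type*} {G : SimpleGraph V} (hc : G.Connected) (u v : V)
    {j : ℕ} (hj : j ≤ G.dist u v) : ∃ w, G.dist u w = j := by
  obtain ⟨p, hp⟩ := (hc.preconnected u v).exists_walk_length_eq_dist
  obtain ⟨w, p1, p2, h1, h2⟩ := walk_split p j (by omega)
  have hd1 : G.dist u w ≤ j := h1 ▸ G.dist_le p1
  have hd2 : G.dist w v ≤ p.length - j := h2 ▸ G.dist_le p2
  have htri := hc.dist_triangle (u := u) (v := w) (w := v)
  exact ⟨w, by omega⟩

lemma reachable_induce {V : Type*} {F : SimpleGraph V} {s : Set V} {a b : V}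
    (p : F.Walk a b) (hsup : ∀ x ∈ p.support, x ∈ s) :
    (F.induce s).Reachable ⟨a, hsup a p.start_mem_support⟩ ⟨b, hsup b p.end_mem_support⟩ := by
  induction p with
  | nil => exact SimpleGraph.Reachable.refl _
  | @cons a c b h q ih =>
    have hc : c ∈ s := hsup c (by simp)
    have hq : ∀ x ∈ q.support, x ∈ s := fun x hx => hsup x (by simp [hx])
    exact SimpleGraph.Reachable.trans
      (SimpleGraph.Adj.reachable (by exact h : (F.induce s).Adj ⟨a, _⟩ ⟨c, hc⟩))
      (ih hq)

lemma ball_lemma {V : Type*} [Fintype V] {G : SimpleGraph V} [DecidableRel G.Adj]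
    (hc : G.Connected) (u : V) :
    ∀ k : ℕ, (∃ v, 3 * k ≤ G.dist u v) →
      k * (G.minDegree + 1) + 1 ≤ Fintype.card V := by
  classical
  have key : ∀ k : ℕ, (∃ v, 3 * k ≤ G.dist u v) →
      k * (G.minDegree + 1) + 1 ≤
        (Finset.univ.filter (fun x => G.dist u x ≤ 3 * k)).card := by
    intro k
    induction k with
    | zero =>
      intro _
      have : u ∈ Finset.univ.filter (fun x => G.dist u x ≤ 0) := by simp
      simpa using Finset.card_pos.mpr ⟨u, this⟩
    | succ k ih =>
      rintro ⟨v, hv⟩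
      obtain ⟨w, hw⟩ := exists_dist_eq_of_le hc u v (j := 3 * k + 2) (by omega)
      have hk := ih ⟨v, by omega⟩
      set B := Finset.univ.filter (fun x => G.dist u x ≤ 3 * k) with hB
      set N := insert w (G.neighborFinset w) with hN
      have hdisj : Disjoint B N := by
        rw [Finset.disjoint_left]
        intro x hxB hxN
        have hx1 : G.dist u x ≤ 3 * k := by simpa [hB] using hxB
        have hx2 : G.dist x w ≤ 1 := by
          rcases Finset.mem_insert.mp hxN with rfl | hadj
          · simp [SimpleGraph.dist_self]
          · have hadj' : G.Adj w x := by simpa using hadj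
            exact le_of_eq (SimpleGraph.dist_eq_one_iff_adj.mpr hadj'.symm)
        have := hc.dist_triangle (u := u) (v := x) (w := w)
        omega
      have hsub : B ∪ N ⊆ Finset.univ.filter (fun x => G.dist u x ≤ 3 * (k + 1)) := by
        intro x hx
        simp only [Finset.mem_filter, Finset.mem_univ, true_and]
        rcases Finset.mem_union.mp hx with hx | hx
        · have : G.dist u x ≤ 3 * k := by simpa [hB] using hx
          omega
        · have hx2 : G.dist w x ≤ 1 := by
            rcases Finset.mem_insert.mp hx with rfl | hadj
            · simp [SimpleGraph.dist_self]
            · exact le_of_eq (SimpleGraph.dist_eq_one_iff_adj.mpr (by simpa using hadj))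
          have := hc.dist_triangle (u := u) (v := w) (w := x)
          omega
      have hNcard : G.minDegree + 1 ≤ N.card := by
        rw [hN, Finset.card_insert_of_notMem (by simp)]
        exact Nat.add_le_add_right (G.minDegree_le_degree w) 1
      calc (k + 1) * (G.minDegree + 1) + 1
          = (k * (G.minDegree + 1) + 1) + (G.minDegree + 1) := by ring
        _ ≤ B.card + N.card := Nat.add_le_add hk hNcard
        _ = (B ∪ N).card := (Finset.card_union_of_disjoint hdisj).symm
        _ ≤ _ := Finset.card_le_card hsub
  intro k hk
  exact le_trans (key k hk) (le_trans (Finset.card_le_card (Finset.subset_univ _)) (le_of_eq (Finset.card_univ)))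

lemma diam_bound {V : Type*} [Fintype V] {G : SimpleGraph V} [DecidableRel G.Adj]
    (hc : G.Connected) :
    (G.diam / 3) * (G.minDegree + 1) + 1 ≤ Fintype.card V := by
  have : Nonempty V := hc.nonempty
  obtain ⟨u, v, huv⟩ := SimpleGraph.exists_dist_eq_diam (G := G)
  exact ball_lemma hc u (G.diam / 3) ⟨v, by omega⟩

lemma ediam_ne_top_of_connected {V : Type*} [Fintype V] {G : SimpleGraph V}
    (hc : G.Connected) : G.ediam ≠ ⊤ := by
  have : Nonempty V := hc.nonempty
  obtain ⟨u, v, huv⟩ := SimpleGraph.exists_edist_eq_ediam_of_finite (G := G)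
  rw [← huv]
  exact SimpleGraph.edist_ne_top_iff_reachable.mpr (hc.preconnected u v)

lemma boxProd_dist_le {V W : Type*} {G : SimpleGraph V} {H : SimpleGraph W}
    (hG : G.Connected) (hH : H.Connected) (a c : V) (b d : W) :
    (G.boxProd H).dist (a, b) (c, d) ≤ G.dist a c + H.dist b d := by
  obtain ⟨p, hp⟩ := (hG.preconnected a c).exists_walk_length_eq_dist
  obtain ⟨q, hq⟩ := (hH.preconnected b d).exists_walk_length_eq_dist
  have := SimpleGraph.dist_le ((p.boxProdLeft H b).append (q.boxProdRight G c))
  have hL : (p.boxProdLeft H b).length = p.length := SimpleGraph.Walk.length_map ..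
  have hR : (q.boxProdRight G c).length = q.length := SimpleGraph.Walk.length_map ..
  simpa [SimpleGraph.Walk.length_append, hL, hR, hp, hq] using this

lemma boxProd_diam_le {V W : Type*} [Fintype V] [Fintype W]
    {G : SimpleGraph V} {H : SimpleGraph W}
    (hG : G.Connected) (hH : H.Connected) :
    (G.boxProd H).diam ≤ G.diam + H.diam := by
  have : Nonempty V := hG.nonempty
  have : Nonempty W := hH.nonempty
  obtain ⟨u, v, huv⟩ := SimpleGraph.exists_dist_eq_diam (G := G.boxProd H)
  rw [← huv]
  calc (G.boxProd H).dist u v ≤ G.dist u.1 v.1 + H.dist u.2 v.2 :=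
        boxProd_dist_le hG hH u.1 v.1 u.2 v.2
    _ ≤ G.diam + H.diam :=
        Nat.add_le_add (SimpleGraph.dist_le_diam (ediam_ne_top_of_connected hG))
          (SimpleGraph.dist_le_diam (ediam_ne_top_of_connected hH))

lemma boxProd_induce_connected {V W : Type*} [Fintype V] [Fintype W]
    {G : SimpleGraph V} {H : SimpleGraph W} [DecidableRel G.Adj]
    (hG : G.Connected) (hH : H.Connected)
    (S : Set (V × W)) (hrow : S.ncard < Fintype.card W) (hdeg : S.ncard < G.minDegree) :
    ((G.boxProd H).induce Sᶜ).Connected := by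
  classical
  have hSfin : S.Finite := Set.toFinite S
  have hfree : ∃ h₀ : W, ∀ v : V, (v, h₀) ∉ S := by
    by_contra hcon
    push_neg at hcon
    have hinj : Function.Injective
        (fun h : W => (⟨((hcon h).choose, h), (hcon h).choose_spec⟩ : S)) := by
      intro h1 h2 he
      simpa using congrArg (fun x : S => x.1.2) he
    have hle := Fintype.card_le_of_injective _ hinj
    have : Fintype.card W ≤ S.ncard := by
      calc Fintype.card W ≤ Fintype.card S := hle
        _ = Nat.card S := Nat.card_eq_fintype_card.symm
        _ = S.ncard := Nat.card_coe_set_eq S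
    omega
  obtain ⟨h₀, hrow0⟩ := hfree
  have hgood : ∀ v : V, ∃ w : V, G.Adj v w ∧ ∀ h' : W, (w, h') ∉ S := by
    intro v
    have himg : (Prod.fst '' S).ncard ≤ S.ncard := Set.ncard_image_le hSfin
    by_contra hcon
    push_neg at hcon
    have hsub : ↑(G.neighborFinset v) ⊆ Prod.fst '' S := by
      intro w hw
      rw [Finset.mem_coe, SimpleGraph.mem_neighborFinset] at hw
      obtain ⟨h', hh'⟩ := hcon w hw
      exact ⟨(w, h'), hh', rfl⟩
    have hle := Set.ncard_le_ncard hsub (hSfin.image _)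
    rw [Set.ncard_coe_finset] at hle
    have hdegv := G.minDegree_le_degree v
    rw [← SimpleGraph.card_neighborFinset_eq_degree] at hdegv
    omega
  rw [SimpleGraph.connected_iff]
  have : Nonempty V := hG.nonempty
  refine ⟨?_, ⟨⟨(Classical.arbitrary V, h₀), hrow0 _⟩⟩⟩
  have step : ∀ (v : V) (h : W) (hvh : (v, h) ∈ Sᶜ), ∃ (w : V) (hw : (w, h₀) ∈ Sᶜ),
      ((G.boxProd H).induce Sᶜ).Reachable ⟨(v, h), hvh⟩ ⟨(w, h₀), hw⟩ := by
    intro v h hvh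
    obtain ⟨w, hadj, hwfree⟩ := hgood v
    obtain ⟨q⟩ := hH.preconnected h h₀
    have hadj2 : (G.boxProd H).Adj (v, h) (w, h) :=
      SimpleGraph.boxProd_adj.mpr (Or.inl ⟨hadj, rfl⟩)
    set p := SimpleGraph.Walk.cons hadj2 (q.boxProdRight G w) with hp
    have hsup : ∀ x ∈ p.support, x ∈ Sᶜ := by
      intro x hx
      rw [hp, SimpleGraph.Walk.support_cons] at hx
      rcases List.mem_cons.mp hx with rfl | hx
      · exact hvh
      · rw [show (q.boxProdRight G w).support = q.support.map (G.boxProdRight H w).toHom from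
          SimpleGraph.Walk.support_map ..] at hx
        obtain ⟨h', _, rfl⟩ := List.mem_map.mp hx
        exact hwfree h'
    exact ⟨w, hwfree h₀, reachable_induce p hsup⟩
  rintro ⟨⟨v, h⟩, hx⟩ ⟨⟨v', h'⟩, hy⟩
  obtain ⟨w, hw, r1⟩ := step v h hx
  obtain ⟨w', hw', r2⟩ := step v' h' hy
  obtain ⟨pg⟩ := hG.preconnected w w'
  have hsuprow : ∀ x ∈ (pg.boxProdLeft H h₀).support, x ∈ Sᶜ := by
    intro x hx2
    rw [show (pg.boxProdLeft H h₀).support = pg.support.map (G.boxProdLeft H h₀).toHom from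
        SimpleGraph.Walk.support_map ..] at hx2
    obtain ⟨u, _, rfl⟩ := List.mem_map.mp hx2
    exact hrow0 u
  exact r1.trans ((reachable_induce _ hsuprow).trans r2.symm)

lemma card_le_pebblingNumber {V : Type*} [Fintype V] [DecidableEq V] [Nonempty V]
    {G : SimpleGraph V} {p : ℕ}
    (hp : ∀ C : V → ℕ, ∑ v, C v = p → ∀ r : V, Solvable G C r) :
    Fintype.card V ≤ p := by
  classical
  by_contra hlt
  push_neg at hlt
  obtain ⟨r⟩ := (inferInstance : Nonempty V)
  have hcard : p ≤ (Finset.univ.erase r).card := by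
    rw [Finset.card_erase_of_mem (Finset.mem_univ r), Finset.card_univ]
    omega
  obtain ⟨T, hTsub, hTcard⟩ := Finset.exists_subset_card_eq hcard
  set C : V → ℕ := fun v => if v ∈ T then 1 else 0 with hC
  have hsum : ∑ v, C v = p := by
    rw [hC]
    rw [Finset.sum_ite_mem, Finset.univ_inter, Finset.sum_const, smul_eq_mul, mul_one]
    exact hTcard
  obtain ⟨C', hrel, hC'⟩ := hp C hsum r
  have hCle : ∀ u, C u ≤ 1 := fun u => by simp only [hC]; split <;> omega
  rcases Relation.ReflTransGen.cases_head hrel with heq | ⟨c, ⟨u, v, _, h2, _⟩, _⟩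
  · subst heq
    have hr : C r = 0 := by
      rw [hC]
      have : r ∉ T := fun hmem => (Finset.mem_erase.mp (hTsub hmem)).1 rfl
      simp [this]
    omega
  · have := hCle u
    omega

/-- If `G` and `H` are connected graphs on `n` vertices each with
`δ = min{δ(G), δ(H)}` satisfying `δ ≥ 2^(12n/δ + 15)`, then, assuming the
Czygrinow–Hurlbert–Kierstead–Trotter theorem (every graph of diameter at most `d`
and connectivity at least `2^(2d+3)` is Class 0), the product `G □ H` is Class 0,
i.e. `π(G □ H) = n²`, and hence `π(G □ H) ≤ π(G)·π(H)`. -/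
theorem boxProd_class0_of_minDegree {V W : Type} [Fintype V] [Fintype W]
    [DecidableEq V] [DecidableEq W]
    (G : SimpleGraph V) (H : SimpleGraph W)
    [DecidableRel G.Adj] [DecidableRel H.Adj]
    (hG : G.Connected) (hH : H.Connected)
    (n : ℕ) (hnV : Fintype.card V = n) (hnW : Fintype.card W = n)
    (δ : ℕ) (hδ : δ = min G.minDegree H.minDegree)
    (hbig : (2 : ℝ) ^ ((12 * n : ℝ) / (δ : ℝ) + 15) ≤ (δ : ℝ))
    (CHKT : ∀ (U : Type) (_ : Fintype U) (_ : DecidableEq U)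
      (F : SimpleGraph U) (d : ℕ), F.Connected → F.diam ≤ d →
      HasConnectivityAtLeast F (2 ^ (2 * d + 3)) →
      IsPebblingNumber F (Fintype.card U)) :
    IsPebblingNumber (G.boxProd H) (n ^ 2) ∧
    (∀ q pG pH : ℕ, IsPebblingNumber (G.boxProd H) q →
      IsPebblingNumber G pG → IsPebblingNumber H pH → q ≤ pG * pH) := by
  classical
  have hVne : Nonempty V := hG.nonempty
  have hWne : Nonempty W := hH.nonempty
  -- positivity of δ
  have hδpos : 0 < δ := by
    by_contra h0
    push_neg at h0
    have hz : δ = 0 := by omega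
    rw [hz, Nat.cast_zero] at hbig
    have := Real.rpow_pos_of_pos (by norm_num : (0:ℝ) < 2) ((12 * n : ℝ) / 0 + 15)
    linarith
  have hδG : δ ≤ G.minDegree := hδ ▸ min_le_left _ _
  have hδH : δ ≤ H.minDegree := hδ ▸ min_le_right _ _
  have hδn : δ < n := by
    obtain ⟨v₀⟩ := hVne
    have h1 := G.minDegree_le_degree v₀
    have h2 := G.degree_lt_card_verts v₀
    omega
  -- diameter bounds
  set kG := G.diam / 3 with hkG
  set kH := H.diam / 3 with hkH
  have hballG : kG * (G.minDegree + 1) + 1 ≤ n := hnV ▸ diam_bound hG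
  have hballH : kH * (H.minDegree + 1) + 1 ≤ n := hnW ▸ diam_bound hH
  have hdG : G.diam ≤ 3 * kG + 2 := by omega
  have hdH : H.diam ≤ 3 * kH + 2 := by omega
  have hdF : (G.boxProd H).diam ≤ G.diam + H.diam := boxProd_diam_le hG hH
  set d := (G.boxProd H).diam with hd
  -- the power bound 2 ^ (2d+3) ≤ δ
  have hkGδ : kG * δ ≤ n := by nlinarith [hballG, hδG]
  have hkHδ : kH * δ ≤ n := by nlinarith [hballH, hδH]
  have hkGr : (kG : ℝ) ≤ (n : ℝ) / (δ : ℝ) := by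
    rw [le_div_iff₀ (by exact_mod_cast hδpos)]
    exact_mod_cast hkGδ
  have hkHr : (kH : ℝ) ≤ (n : ℝ) / (δ : ℝ) := by
    rw [le_div_iff₀ (by exact_mod_cast hδpos)]
    exact_mod_cast hkHδ
  have hexp : ((2 * d + 3 : ℕ) : ℝ) ≤ (12 * n : ℝ) / (δ : ℝ) + 15 := by
    have hdr : (d : ℝ) ≤ 3 * kG + 2 + (3 * kH + 2) := by
      have : d ≤ 3 * kG + 2 + (3 * kH + 2) := by omega
      exact_mod_cast this
    have h12 : (12 * n : ℝ) / (δ : ℝ) = 12 * ((n : ℝ) / (δ : ℝ)) := by ring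
    push_cast
    rw [h12]
    linarith
  have hpow : 2 ^ (2 * d + 3) ≤ δ := by
    have h1 : ((2 ^ (2 * d + 3) : ℕ) : ℝ) = (2 : ℝ) ^ (((2 * d + 3 : ℕ) : ℝ)) := by
      rw [Real.rpow_natCast]
      push_cast
      ring
    have h2 : (2 : ℝ) ^ (((2 * d + 3 : ℕ) : ℝ)) ≤ (2 : ℝ) ^ ((12 * n : ℝ) / (δ : ℝ) + 15) :=
      Real.rpow_le_rpow_of_exponent_le one_le_two hexp
    have h3 : ((2 ^ (2 * d + 3) : ℕ) : ℝ) ≤ (δ : ℝ) := by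
      rw [h1]
      exact le_trans h2 hbig
    exact_mod_cast h3
  -- connectivity hypothesis
  have hconn : HasConnectivityAtLeast (G.boxProd H) (2 ^ (2 * d + 3)) := by
    intro S hS
    refine le_trans hpow ?_
    by_contra hlt
    push_neg at hlt
    exact hS (boxProd_induce_connected hG hH S (by omega) (by omega))
  have hmain := CHKT (V × W) inferInstance inferInstance (G.boxProd H) d
    (hG.boxProd hH) le_rfl hconn
  rw [Fintype.card_prod, hnV, hnW, ← sq] at hmain
  refine ⟨hmain, ?_⟩
  intro q pG pH hq hpG hpH
  have hqe : q = n ^ 2 := IsLeast.unique hq hmain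
  have h1 : n ≤ pG := by
    have := card_le_pebblingNumber (G := G) hpG.1
    omega
  have h2 : n ≤ pH := by
    have := card_le_pebblingNumber (G := H) hpH.1
    omega
  calc q = n * n := by rw [hqe]; ring
    _ ≤ pG * pH := Nat.mul_le_mul h1 h2
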